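/- arXiv:math/0606635 — 2 statements merged into one kernel-verified Lean document; each statement's English description precedes it below -/
import Mathlib

section
/- There is no member of 𝓚 of minimum length; that is, there is no pair (p, q) with p < q, p and q in the Cantor set, and (p, q) disjoint from the Cantor set, such that q - p ≤ q' - p' for every pair (p', q') with p' < q', p' and q' in the Cantor set, and (p', q') disjoint from the Cantor set. -/
lemma div_three_mem_cantorSet {x : ℝ} (hx : x ∈ cantorSet) : x / 3 ∈ cantorSet := by
  intro S hS
  simp only [Set.mem_range] at hS
  obtain ⟨n, rfl⟩ := hS
  cases n with
  | zero =>
    have h01 := cantorSet_subset_unitInterval hx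
    simp only [preCantorSet_zero, Set.mem_Icc] at h01 ⊢
    constructor <;> nlinarith [h01.1, h01.2]
  | succ n =>
    exact Or.inl ⟨x, Set.mem_iInter.mp hx n, rfl⟩

lemma preCantorSet_subset_unitInterval' {n : ℕ} : preCantorSet n ⊆ Set.Icc 0 1 := by
  induction n with
  | zero => simp
  | succ n ih =>
    rintro y (⟨x, hx, rfl⟩ | ⟨x, hx, rfl⟩) <;>
      obtain ⟨h0, h1⟩ := ih hx <;>
      constructor <;> simp only <;> linarith

lemma three_mul_mem_cantorSet {y : ℝ} (hy : y ∈ cantorSet) (hlt : y < 1/3) :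
    3 * y ∈ cantorSet := by
  simp only [cantorSet, Set.mem_iInter]
  intro n
  have h := Set.mem_iInter.mp hy (n + 1)
  rcases h with ⟨x, hx, hxy⟩ | ⟨x, hx, hxy⟩
  · simp only at hxy
    have : 3 * y = x := by linarith [hxy]
    rwa [this]
  · exfalso
    have hx01 : x ∈ Set.Icc (0:ℝ) 1 := preCantorSet_subset_unitInterval' hx
    simp only at hxy
    have : y ≥ 2/3 := by linarith [hx01.1, hxy]
    linarith

/-- There is no complementary interval of the Cantor set of minimum
length: no pair `(p, q)` with `p < q`, `p, q` in the Cantor set and `(p, q)` disjoint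
from it, such that `q - p ≤ q' - p'` for every such pair `(p', q')`. -/
theorem stmt_12 :
    ¬ ∃ p q : ℝ, (p < q ∧ p ∈ cantorSet ∧ q ∈ cantorSet ∧
        Disjoint (Set.Ioo p q) cantorSet) ∧
      ∀ p' q' : ℝ, (p' < q' ∧ p' ∈ cantorSet ∧ q' ∈ cantorSet ∧
          Disjoint (Set.Ioo p' q') cantorSet) → q - p ≤ q' - p' := by
  rintro ⟨p, q, ⟨hpq, hp, hq, hdisj⟩, hmin⟩
  have hq1 : q ≤ 1 := (cantorSet_subset_unitInterval hq).2
  have hp0 : 0 ≤ p := (cantorSet_subset_unitInterval hp).1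
  have key := hmin (p/3) (q/3) ⟨by linarith, div_three_mem_cantorSet hp,
    div_three_mem_cantorSet hq, ?_⟩
  · linarith
  · rw [Set.disjoint_left]
    rintro y ⟨hy1, hy2⟩ hyC
    have hylt : y < 1/3 := by linarith
    have h3y : 3 * y ∈ cantorSet := three_mul_mem_cantorSet hyC hylt
    exact Set.disjoint_left.mp hdisj ⟨by linarith, by linarith⟩ h3y
end

section
/- The union over all n ≥ 2 of the triangles (convex hulls) with vertices X_n = (x_n, 0), B = (a, b), and X_1 = (x_1, 0) is a proper subset of the triangle (convex hull) with vertices A = (a, 0), B = (a, b), and X_1 = (x_1, 0); in particular, the point (a, b/2) belongs to the latter triangle but to none of the former. -/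
/-- The union over `n` of the triangles with vertices `Xₙ₊₂ = (x (n+1), 0)`
(the terms after the first), `B = (a, b)` and `X₁ = (x 0, 0)` is a proper subset of the
triangle with vertices `A = (a, 0)`, `B`, `X₁`; in particular `(a, b/2)` belongs to the
latter triangle but to none of the former. -/
theorem stmt_13 (x : ℕ → ℝ) (a b : ℝ)
    (hpos : ∀ n, 0 < x n) (hanti : StrictAnti x)
    (hlim : Filter.Tendsto x Filter.atTop (nhds a)) (hb : 0 < b) :
    (⋃ n : ℕ, convexHull ℝ ({(x (n + 1), 0), (a, b), (x 0, 0)} : Set (ℝ × ℝ)))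
        ⊂ convexHull ℝ ({(a, 0), (a, b), (x 0, 0)} : Set (ℝ × ℝ)) ∧
      ((a, b / 2) : ℝ × ℝ) ∈ convexHull ℝ ({(a, 0), (a, b), (x 0, 0)} : Set (ℝ × ℝ)) ∧
      ∀ n : ℕ, ((a, b / 2) : ℝ × ℝ) ∉
        convexHull ℝ ({(x (n + 1), 0), (a, b), (x 0, 0)} : Set (ℝ × ℝ)) := by
  have ha : ∀ n, a < x n := by
    intro n
    have h1 : a ≤ x (n + 1) :=
      le_of_tendsto hlim (Filter.eventually_atTop.2
        ⟨n + 1, fun m hm => hanti.antitone hm⟩)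
    exact lt_of_le_of_lt h1 (hanti (Nat.lt_succ_self n))
  -- membership of midpoint
  have hmem : ((a, b / 2) : ℝ × ℝ) ∈
      convexHull ℝ ({(a, 0), (a, b), (x 0, 0)} : Set (ℝ × ℝ)) := by
    have hseg := segment_subset_convexHull (𝕜 := ℝ)
      (show ((a, 0) : ℝ × ℝ) ∈ ({(a, 0), (a, b), (x 0, 0)} : Set (ℝ × ℝ)) by left; rfl)
      (show ((a, b) : ℝ × ℝ) ∈ ({(a, 0), (a, b), (x 0, 0)} : Set (ℝ × ℝ)) by
        right; left; rfl)
    apply hseg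
    refine ⟨(1:ℝ)/2, (1:ℝ)/2, by norm_num, by norm_num, by norm_num, ?_⟩
    ext <;> simp <;> ring
  -- each small triangle is contained in the big one
  have hsub : ∀ n : ℕ,
      convexHull ℝ ({(x (n + 1), 0), (a, b), (x 0, 0)} : Set (ℝ × ℝ)) ⊆
      convexHull ℝ ({(a, 0), (a, b), (x 0, 0)} : Set (ℝ × ℝ)) := by
    intro n
    apply convexHull_min _ (convex_convexHull ℝ _)
    intro p hp
    simp only [Set.mem_insert_iff, Set.mem_singleton_iff] at hp
    rcases hp with rfl | rfl | rfl
    · have hseg := segment_subset_convexHull (𝕜 := ℝ)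
        (show ((a, 0) : ℝ × ℝ) ∈ ({(a, 0), (a, b), (x 0, 0)} : Set (ℝ × ℝ)) by left; rfl)
        (show ((x 0, 0) : ℝ × ℝ) ∈ ({(a, 0), (a, b), (x 0, 0)} : Set (ℝ × ℝ)) by
          right; right; rfl)
      apply hseg
      have hxa : (0:ℝ) < x 0 - a := sub_pos.2 (ha 0)
      have hx1 : x (n + 1) < x 0 := hanti (Nat.succ_pos n)
      refine ⟨(x 0 - x (n + 1)) / (x 0 - a), (x (n + 1) - a) / (x 0 - a),
        div_nonneg (by linarith) hxa.le, div_nonneg (by linarith [ha (n+1)]) hxa.le,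
        by field_simp; ring, ?_⟩
      ext
      · simp only [Prod.fst_add, Prod.smul_fst, smul_eq_mul]
        field_simp
        ring
      · simp
    · exact subset_convexHull ℝ _ (by right; left; rfl)
    · exact subset_convexHull ℝ _ (by right; right; rfl)
  -- midpoint not in small triangles
  have hnot : ∀ n : ℕ, ((a, b / 2) : ℝ × ℝ) ∉
      convexHull ℝ ({(x (n + 1), 0), (a, b), (x 0, 0)} : Set (ℝ × ℝ)) := by
    intro n hmem'
    set c := x (n + 1) with hc
    have hca : a < c := ha (n + 1)
    -- halfspace containing the triangle
    have hlin : IsLinearMap ℝ (fun p : ℝ × ℝ => (-(c - a)) * p.2 + (-b) * p.1) := by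
      constructor
      · intro p q; simp [Prod.fst_add, Prod.snd_add]; ring
      · intro r p; simp [Prod.smul_fst, Prod.smul_snd, smul_eq_mul]; ring
    have hconv : Convex ℝ {p : ℝ × ℝ |
        (-(c - a)) * p.2 + (-b) * p.1 ≤ -(c - a) * b - b * a} :=
      convex_halfSpace_le hlin _
    have hsubset : convexHull ℝ ({(c, 0), (a, b), (x 0, 0)} : Set (ℝ × ℝ)) ⊆
        {p : ℝ × ℝ | (-(c - a)) * p.2 + (-b) * p.1 ≤ -(c - a) * b - b * a} := by
      apply convexHull_min _ hconv
      intro p hp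
      simp only [Set.mem_insert_iff, Set.mem_singleton_iff] at hp
      rcases hp with rfl | rfl | rfl
      · simp only [Set.mem_setOf_eq]; nlinarith
      · simp only [Set.mem_setOf_eq]; nlinarith
      · simp only [Set.mem_setOf_eq]
        have := hanti (Nat.succ_pos n)
        nlinarith
    have := hsubset hmem'
    simp only [Set.mem_setOf_eq] at this
    nlinarith
  refine ⟨?_, hmem, hnot⟩
  constructor
  · exact Set.iUnion_subset hsub
  · intro hcon
    exact hnot 0 (by rcases Set.mem_iUnion.1 (hcon hmem) with ⟨m, hm⟩; exact (hnot m hm).elim)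
end
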